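/- Let F(z) = z + z^q with q ≥ 2 an integer, and let H(w) = ∑ h_n w^n be a power series with nonnegative coefficients and 0 < r(H) < ∞. For a positive integer k define G(z) = ∑_n h_n z^n (1 + z^{q−1})^{⌊n/k⌋}. Then r(H)^k = r(G)^{k−1}·F(r(G)) = r(G)^k·(1 + r(G)^{q−1}). -/

import Mathlib

open scoped ENNReal NNReal

/-- `r` is the radius of convergence of the power series with coefficients
`a`: the series converges absolutely strictly inside radius `r` and diverges
strictly outside. -/
def IsRadius (a : ℕ → ℝ) (r : ℝ) : Prop :=
  (∀ x : ℝ, |x| < r → Summable (fun n => a n * x ^ n)) ∧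
  (∀ x : ℝ, r < |x| → ¬ Summable (fun n => a n * x ^ n))

/-- The coefficient of `z^N` in `G(z) = ∑_n h_n z^n (1 + z^(q-1))^⌊n/k⌋`. -/
noncomputable def Gcoeff (h : ℕ → ℝ) (q k : ℕ) (N : ℕ) : ℝ :=
  ∑ n ∈ Finset.range (N + 1), ∑ j ∈ Finset.range (n / k + 1),
    if n + j * (q - 1) = N then h n * (Nat.choose (n / k) j : ℝ) else 0

lemma BGR.summable_iff_tsum_ofReal_ne_top {f : ℕ → ℝ} (hf : ∀ n, 0 ≤ f n) :
    Summable f ↔ (∑' n, ENNReal.ofReal (f n)) ≠ ⊤ := by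
  set g : ℕ → ℝ≥0 := fun n => ⟨f n, hf n⟩ with hg
  have h1 : ∀ n, ENNReal.ofReal (f n) = ((g n : ℝ≥0) : ℝ≥0∞) := by
    intro n
    rw [ENNReal.ofReal]
    congr 1
    ext
    simp [g, Real.coe_toNNReal _ (hf n)]
    rfl
  simp_rw [h1]
  rw [ENNReal.tsum_coe_ne_top_iff_summable]
  exact (NNReal.summable_mk hf).symm

lemma BGR.Gcoeff_nonneg (h : ℕ → ℝ) (q k : ℕ) (hnonneg : ∀ n, 0 ≤ h n) (N : ℕ) :
    0 ≤ Gcoeff h q k N := by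
  refine Finset.sum_nonneg fun n _ => Finset.sum_nonneg fun j _ => ?_
  split
  · exact mul_nonneg (hnonneg n) (Nat.cast_nonneg _)
  · exact le_refl 0

lemma BGR.tsum_G_eq (h : ℕ → ℝ) (q k : ℕ) (hnonneg : ∀ n, 0 ≤ h n) (x : ℝ) (hx : 0 ≤ x) :
    ∑' N, ENNReal.ofReal (Gcoeff h q k N * x ^ N)
      = ∑' n, ENNReal.ofReal (h n * x ^ n * (1 + x ^ (q - 1)) ^ (n / k)) := by
  set F : ℕ → ℕ → ℕ → ℝ≥0∞ := fun N n j =>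
    if n + j * (q - 1) = N ∧ j ≤ n / k then
      ENNReal.ofReal (h n * (Nat.choose (n / k) j : ℝ) * x ^ (n + j * (q - 1))) else 0
    with hF
  have hterm_nonneg : ∀ n j : ℕ, 0 ≤ h n * (Nat.choose (n / k) j : ℝ) * x ^ (n + j * (q - 1)) :=
    fun n j => mul_nonneg (mul_nonneg (hnonneg n) (Nat.cast_nonneg _)) (pow_nonneg hx _)
  -- Step A
  have stepA : ∀ N, ENNReal.ofReal (Gcoeff h q k N * x ^ N) = ∑' n, ∑' j, F N n j := by
    intro N
    have hA1 : ∀ n, ∑' j, F N n j = ∑ j ∈ Finset.range (n / k + 1), F N n j := by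
      intro n
      refine tsum_eq_sum ?_
      intro j hj
      simp only [Finset.mem_range, not_lt] at hj
      simp only [hF, ite_eq_right_iff]
      intro ⟨_, hj'⟩
      omega
    have hA2 : ∑' n, ∑ j ∈ Finset.range (n / k + 1), F N n j
        = ∑ n ∈ Finset.range (N + 1), ∑ j ∈ Finset.range (n / k + 1), F N n j := by
      refine tsum_eq_sum ?_
      intro n hn
      simp only [Finset.mem_range, not_lt] at hn
      refine Finset.sum_eq_zero fun j _ => ?_
      simp only [hF, ite_eq_right_iff]
      intro ⟨he, _⟩
      omega
    simp_rw [hA1]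
    rw [hA2]
    have hG : Gcoeff h q k N * x ^ N = ∑ n ∈ Finset.range (N + 1), ∑ j ∈ Finset.range (n / k + 1),
        (if n + j * (q - 1) = N ∧ j ≤ n / k then
          h n * (Nat.choose (n / k) j : ℝ) * x ^ (n + j * (q - 1)) else 0) := by
      rw [Gcoeff, Finset.sum_mul]
      refine Finset.sum_congr rfl fun n _ => ?_
      rw [Finset.sum_mul]
      refine Finset.sum_congr rfl fun j hj => ?_
      simp only [Finset.mem_range] at hj
      rw [ite_mul, zero_mul]
      by_cases hc : n + j * (q - 1) = N
      · rw [if_pos hc, if_pos ⟨hc, by omega⟩, hc]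
      · rw [if_neg hc, if_neg (by tauto)]
    rw [hG, ENNReal.ofReal_sum_of_nonneg (fun n _ => Finset.sum_nonneg fun j _ => by
        split
        · exact hterm_nonneg _ _
        · exact le_refl 0)]
    refine Finset.sum_congr rfl fun n _ => ?_
    rw [ENNReal.ofReal_sum_of_nonneg (fun j _ => by
        split
        · exact hterm_nonneg _ _
        · exact le_refl 0)]
    refine Finset.sum_congr rfl fun j _ => ?_
    simp only [hF]
    split
    · rfl
    · exact ENNReal.ofReal_zero
  -- Step C : sum over N of F N n j
  have stepC : ∀ n j, ∑' N, F N n j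
      = if j ≤ n / k then
          ENNReal.ofReal (h n * (Nat.choose (n / k) j : ℝ) * x ^ (n + j * (q - 1))) else 0 := by
    intro n j
    rw [tsum_eq_single (n + j * (q - 1)) (fun N hN => by
      simp only [hF, ite_eq_right_iff]
      intro ⟨he, _⟩
      exact absurd he.symm hN)]
    by_cases hc : j ≤ n / k
    · simp [hF, hc]
    · simp [hF, hc]
  -- Step D : binomial theorem
  have stepD : ∀ n : ℕ,
      (∑ j ∈ Finset.range (n / k + 1),
        ENNReal.ofReal (h n * (Nat.choose (n / k) j : ℝ) * x ^ (n + j * (q - 1))))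
      = ENNReal.ofReal (h n * x ^ n * (1 + x ^ (q - 1)) ^ (n / k)) := by
    intro n
    rw [← ENNReal.ofReal_sum_of_nonneg (fun j _ => hterm_nonneg n j)]
    congr 1
    have hb : (1 + x ^ (q - 1)) ^ (n / k) = (x ^ (q - 1) + 1) ^ (n / k) := by ring_nf
    rw [hb, add_pow, Finset.mul_sum]
    refine Finset.sum_congr rfl fun j _ => ?_
    rw [pow_add, pow_mul, one_pow]
    ring
  -- Put it all together
  calc ∑' N, ENNReal.ofReal (Gcoeff h q k N * x ^ N)
      = ∑' (N : ℕ) (n : ℕ) (j : ℕ), F N n j := tsum_congr stepA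
    _ = ∑' (n : ℕ) (N : ℕ) (j : ℕ), F N n j := ENNReal.tsum_comm
    _ = ∑' (n : ℕ) (j : ℕ) (N : ℕ), F N n j := tsum_congr fun n => ENNReal.tsum_comm
    _ = ∑' (n : ℕ), ∑ j ∈ Finset.range (n / k + 1),
          ENNReal.ofReal (h n * (Nat.choose (n / k) j : ℝ) * x ^ (n + j * (q - 1))) := by
        refine tsum_congr fun n => ?_
        simp_rw [stepC n]
        rw [tsum_eq_sum (s := Finset.range (n / k + 1)) (fun j hj => by
          simp only [Finset.mem_range, not_lt] at hj
          rw [if_neg (by omega)])]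
        refine Finset.sum_congr rfl fun j hj => ?_
        simp only [Finset.mem_range] at hj
        rw [if_pos (by omega)]
    _ = ∑' n, ENNReal.ofReal (h n * x ^ n * (1 + x ^ (q - 1)) ^ (n / k)) :=
        tsum_congr stepD

/-- Summability of the `G` series is equivalent to summability of the natural term series. -/
lemma BGR.summable_G_iff (h : ℕ → ℝ) (q k : ℕ) (hnonneg : ∀ n, 0 ≤ h n) (x : ℝ) (hx : 0 ≤ x) :
    Summable (fun N => Gcoeff h q k N * x ^ N)
      ↔ Summable (fun n => h n * x ^ n * (1 + x ^ (q - 1)) ^ (n / k)) := by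
  rw [BGR.summable_iff_tsum_ofReal_ne_top
      (fun N => mul_nonneg (BGR.Gcoeff_nonneg h q k hnonneg N) (pow_nonneg hx N)),
    BGR.summable_iff_tsum_ofReal_ne_top (fun n => mul_nonneg
      (mul_nonneg (hnonneg n) (pow_nonneg hx n))
      (pow_nonneg (by positivity : (0:ℝ) ≤ 1 + x ^ (q - 1)) _)),
    BGR.tsum_G_eq h q k hnonneg x hx]

lemma BGR.term_summable_of_lt (h : ℕ → ℝ) (q k : ℕ) (rH : ℝ) (hk : 1 ≤ k)
    (hnonneg : ∀ n, 0 ≤ h n) (hrHpos : 0 < rH)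
    (hconv : ∀ y : ℝ, |y| < rH → Summable (fun n => h n * y ^ n))
    (x : ℝ) (hx : 0 < x) (hlt : x ^ k * (1 + x ^ (q - 1)) < rH ^ k) :
    Summable (fun n => h n * x ^ n * (1 + x ^ (q - 1)) ^ (n / k)) := by
  set b : ℝ := 1 + x ^ (q - 1) with hbdef
  have hb1 : 1 < b := by
    have := pow_pos hx (q - 1)
    simp [hbdef]; linarith
  have hb0 : (0:ℝ) ≤ b := by linarith
  set y : ℝ := x * b ^ ((k : ℝ)⁻¹) with hydef
  have hkR : ((k : ℝ)) ≠ 0 := by positivity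
  have hbr : (b ^ ((k:ℝ)⁻¹)) ^ k = b := by
    rw [← Real.rpow_natCast (b ^ ((k:ℝ)⁻¹)) k, ← Real.rpow_mul hb0,
      inv_mul_cancel₀ hkR, Real.rpow_one]
  have hyk : y ^ k = x ^ k * b := by rw [hydef, mul_pow, hbr]
  have hy0 : 0 < y := by
    have : (0:ℝ) < b ^ ((k:ℝ)⁻¹) := Real.rpow_pos_of_pos (by linarith) _
    positivity
  have hylt : y < rH := by
    refine lt_of_pow_lt_pow_left₀ k hrHpos.le ?_
    rw [hyk]; exact hlt
  have hsy : Summable (fun n => h n * y ^ n) := hconv y (by rwa [abs_of_pos hy0])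
  refine Summable.of_nonneg_of_le
    (fun n => mul_nonneg (mul_nonneg (hnonneg n) (pow_nonneg hx.le n)) (pow_nonneg hb0 _))
    (fun n => ?_) hsy
  have hbn : b ^ (n / k) ≤ (b ^ ((k:ℝ)⁻¹)) ^ n := by
    rw [← Real.rpow_natCast b (n / k), ← Real.rpow_natCast (b ^ ((k:ℝ)⁻¹)) n,
      ← Real.rpow_mul hb0]
    refine Real.rpow_le_rpow_of_exponent_le hb1.le ?_
    rw [inv_mul_eq_div]
    exact Nat.cast_div_le
  calc h n * x ^ n * b ^ (n / k) ≤ h n * x ^ n * (b ^ ((k:ℝ)⁻¹)) ^ n := by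
        refine mul_le_mul_of_nonneg_left hbn (mul_nonneg (hnonneg n) (pow_nonneg hx.le n))
    _ = h n * y ^ n := by rw [hydef, mul_pow]; ring

lemma BGR.term_not_summable_of_gt (h : ℕ → ℝ) (q k : ℕ) (rH : ℝ) (hk : 1 ≤ k)
    (hnonneg : ∀ n, 0 ≤ h n)
    (hdiv : ∀ y : ℝ, rH < |y| → ¬ Summable (fun n => h n * y ^ n))
    (x : ℝ) (hx : 0 < x) (hgt : rH ^ k < x ^ k * (1 + x ^ (q - 1))) :
    ¬ Summable (fun n => h n * x ^ n * (1 + x ^ (q - 1)) ^ (n / k)) := by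
  set b : ℝ := 1 + x ^ (q - 1) with hbdef
  have hb1 : 1 < b := by
    have := pow_pos hx (q - 1)
    simp [hbdef]; linarith
  have hb0 : (0:ℝ) ≤ b := by linarith
  set y : ℝ := x * b ^ ((k : ℝ)⁻¹) with hydef
  have hkR : ((k : ℝ)) ≠ 0 := by positivity
  have hbr : (b ^ ((k:ℝ)⁻¹)) ^ k = b := by
    rw [← Real.rpow_natCast (b ^ ((k:ℝ)⁻¹)) k, ← Real.rpow_mul hb0,
      inv_mul_cancel₀ hkR, Real.rpow_one]
  have hyk : y ^ k = x ^ k * b := by rw [hydef, mul_pow, hbr]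
  have hy0 : 0 < y := by
    have : (0:ℝ) < b ^ ((k:ℝ)⁻¹) := Real.rpow_pos_of_pos (by linarith) _
    positivity
  have hygt : rH < y := by
    refine lt_of_pow_lt_pow_left₀ k hy0.le ?_
    rw [hyk]; exact hgt
  intro hs
  refine hdiv y (by rwa [abs_of_pos hy0]) ?_
  refine Summable.of_nonneg_of_le
    (fun n => mul_nonneg (hnonneg n) (pow_nonneg hy0.le n)) (fun n => ?_) (hs.mul_left b)
  have hbn : (b ^ ((k:ℝ)⁻¹)) ^ n ≤ b ^ (n / k + 1) := by
    rw [← Real.rpow_natCast b (n / k + 1), ← Real.rpow_natCast (b ^ ((k:ℝ)⁻¹)) n,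
      ← Real.rpow_mul hb0]
    refine Real.rpow_le_rpow_of_exponent_le hb1.le ?_
    have hklt : (0:ℕ) < k := hk
    have h1 : n < (n / k + 1) * k := by
      rw [← Nat.div_lt_iff_lt_mul hklt]; omega
    have h2 : (n : ℝ) < ((n / k + 1 : ℕ) : ℝ) * (k : ℝ) := by exact_mod_cast h1
    rw [inv_mul_eq_div, div_le_iff₀ (by positivity : (0:ℝ) < (k:ℝ))]
    push_cast at h2 ⊢
    linarith
  calc h n * y ^ n = h n * x ^ n * (b ^ ((k:ℝ)⁻¹)) ^ n := by rw [hydef, mul_pow]; ring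
    _ ≤ h n * x ^ n * b ^ (n / k + 1) := by
        refine mul_le_mul_of_nonneg_left hbn (mul_nonneg (hnonneg n) (pow_nonneg hx.le n))
    _ = b * (h n * x ^ n * b ^ (n / k)) := by rw [pow_succ]; ring

/-- Lemma 3 of Bender, Gao and Richmond: with `F(z) = z + z^q` (`q ≥ 2`),
`H` a power series with nonnegative coefficients and `0 < r(H) < ∞`, and
`G(z) = ∑_n h_n z^n (1 + z^(q-1))^⌊n/k⌋`, one has
`r(H)^k = r(G)^(k-1)·F(r(G)) = r(G)^k·(1 + r(G)^(q-1))`. -/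
theorem bender_gao_richmond_lemma3 (h : ℕ → ℝ) (q k : ℕ) (rH rG : ℝ)
    (hq : 2 ≤ q) (hk : 1 ≤ k)
    (hnonneg : ∀ n, 0 ≤ h n)
    (hrH : IsRadius h rH) (hrHpos : 0 < rH)
    (hrG : IsRadius (Gcoeff h q k) rG) :
    rH ^ k = rG ^ (k - 1) * (rG + rG ^ q) ∧
    rH ^ k = rG ^ k * (1 + rG ^ (q - 1)) := by
  -- rG is nonnegative
  have hrG0 : 0 ≤ rG := by
    by_contra hneg
    push_neg at hneg
    refine hrG.2 0 (by simpa using hneg) ?_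
    refine summable_of_ne_finset_zero (s := {0}) fun n hn => ?_
    simp only [Finset.mem_singleton] at hn
    rw [zero_pow hn, mul_zero]
  set φ : ℝ → ℝ := fun x => x ^ k * (1 + x ^ (q - 1)) with hφ
  have hφcont : Continuous φ :=
    (continuous_pow k).mul (continuous_const.add (continuous_pow (q - 1)))
  have hmain : φ rG = rH ^ k := by
    rcases lt_trichotomy (φ rG) (rH ^ k) with hlt | heq | hgt
    · exfalso
      have h1 : ∀ᶠ x in nhds rG, φ x < rH ^ k :=
        (hφcont.continuousAt (x := rG)).eventually_mem (Iio_mem_nhds hlt)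
      have h2 : ∀ᶠ x in nhdsWithin rG (Set.Ioi rG), φ x < rH ^ k :=
        nhdsWithin_le_nhds h1
      have h3 : ∀ᶠ x in nhdsWithin rG (Set.Ioi rG), x ∈ Set.Ioi rG :=
        eventually_mem_nhdsWithin
      obtain ⟨x, hx1, hx2⟩ := (h2.and h3).exists
      have hxpos : 0 < x := lt_of_le_of_lt hrG0 hx2
      have : Summable (fun N => Gcoeff h q k N * x ^ N) := by
        rw [BGR.summable_G_iff h q k hnonneg x hxpos.le]
        exact BGR.term_summable_of_lt h q k rH hk hnonneg hrHpos hrH.1 x hxpos hx1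
      exact hrG.2 x (by rwa [abs_of_pos hxpos]) this
    · exact heq
    · exfalso
      have hrGpos : 0 < rG := by
        rcases eq_or_lt_of_le hrG0 with heq0 | h
        · exfalso
          have : φ rG = 0 := by
            rw [hφ, ← heq0]
            simp only []
            rw [zero_pow (by omega : k ≠ 0), zero_mul]
          rw [this] at hgt
          exact absurd hgt (not_lt.mpr (le_of_lt (pow_pos hrHpos k)))
        · exact h
      have h1 : ∀ᶠ x in nhds rG, rH ^ k < φ x :=
        (hφcont.continuousAt (x := rG)).eventually_mem (Ioi_mem_nhds hgt)
      have h1' : ∀ᶠ x in nhds rG, 0 < x := eventually_gt_nhds hrGpos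
      have h2 : ∀ᶠ x in nhdsWithin rG (Set.Iio rG), rH ^ k < φ x ∧ 0 < x :=
        nhdsWithin_le_nhds (h1.and h1')
      have h3 : ∀ᶠ x in nhdsWithin rG (Set.Iio rG), x ∈ Set.Iio rG :=
        eventually_mem_nhdsWithin
      obtain ⟨x, ⟨hx1, hxpos⟩, hx2⟩ := (h2.and h3).exists
      have : ¬ Summable (fun N => Gcoeff h q k N * x ^ N) := by
        rw [BGR.summable_G_iff h q k hnonneg x hxpos.le]
        exact BGR.term_not_summable_of_gt h q k rH hk hnonneg hrH.2 x hxpos hx1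
      exact this (hrG.1 x (by rwa [abs_of_pos hxpos]))
  have hsecond : rH ^ k = rG ^ k * (1 + rG ^ (q - 1)) := hmain.symm
  refine ⟨?_, hsecond⟩
  rw [hsecond]
  have hq1 : q - 1 + 1 = q := by omega
  have hk1 : k - 1 + 1 = k := by omega
  calc rG ^ k * (1 + rG ^ (q - 1)) = rG ^ (k - 1) * rG * (1 + rG ^ (q - 1)) := by
        rw [← pow_succ, hk1]
    _ = rG ^ (k - 1) * (rG + rG ^ (q - 1) * rG) := by ring
    _ = rG ^ (k - 1) * (rG + rG ^ q) := by rw [← pow_succ, hq1]
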